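/- Let f : ℝ → [0,1] be measurable and let f̄(x) = (1/√(2πσ²)) ∫_ℝ f(t) exp(−(x−t)²/(2σ²)) dt be its Gaussian smoothing with variance σ² > 0. Then for all x, the second derivative of f̄ satisfies |f̄''(x)| ≤ 2/σ². -/

import Mathlib

open MeasureTheory Real Set Metric

section Aux

variable {σ : ℝ}

private lemma integrable_shift_exp (c x₀ : ℝ) (hc : 0 < c) :
    Integrable (fun t : ℝ => Real.exp (-(x₀ - t) ^ 2 / c)) := by
  have h : Integrable fun u : ℝ => Real.exp (-(1/c) * u ^ 2) :=
    integrable_exp_neg_mul_sq (by positivity)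
  have := h.comp_sub_left x₀
  convert this using 2 with t
  congr 1
  ring

private lemma hasDerivAt_K (σ t x : ℝ) (hσ : σ ≠ 0) :
    HasDerivAt (fun x => Real.exp (-(x - t) ^ 2 / (2 * σ ^ 2)))
      (-(x - t) / σ ^ 2 * Real.exp (-(x - t) ^ 2 / (2 * σ ^ 2))) x := by
  have h0 : HasDerivAt (fun x : ℝ => (x - t) ^ 2) (2 * (x - t)) x := by
    simpa using ((hasDerivAt_id x).sub_const t).fun_pow 2
  have h1 : HasDerivAt (fun x : ℝ => -(x - t) ^ 2 / (2 * σ ^ 2)) (-(x - t) / σ ^ 2) x := by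
    refine (h0.fun_neg.div_const (2 * σ ^ 2)).congr_deriv ?_
    field_simp
  convert h1.exp using 1
  ring

private lemma hasDerivAt_K' (σ t x : ℝ) (hσ : σ ≠ 0) :
    HasDerivAt (fun x => -(x - t) / σ ^ 2 * Real.exp (-(x - t) ^ 2 / (2 * σ ^ 2)))
      (((x - t) ^ 2 / σ ^ 4 - 1 / σ ^ 2) * Real.exp (-(x - t) ^ 2 / (2 * σ ^ 2))) x := by
  have h1 : HasDerivAt (fun x : ℝ => -(x - t) / σ ^ 2) (-1 / σ ^ 2) x := by
    simpa using (((hasDerivAt_id x).sub_const t).neg).div_const (σ ^ 2)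
  have h2 := hasDerivAt_K σ t x hσ
  refine (h1.fun_mul h2).congr_deriv ?_
  field_simp
  ring

private lemma sq_mul_exp_le' {a : ℝ} (ha : 0 < a) (u : ℝ) :
    u ^ 2 * Real.exp (-(u ^ 2 / a)) ≤ a := by
  have hs : 0 ≤ u ^ 2 / a := by positivity
  have h : u ^ 2 / a ≤ Real.exp (u ^ 2 / a) :=
    le_trans (by linarith) (Real.add_one_le_exp _)
  have h2 : u ^ 2 ≤ a * Real.exp (u ^ 2 / a) := by
    calc u ^ 2 = a * (u ^ 2 / a) := by field_simp
    _ ≤ a * Real.exp (u ^ 2 / a) := by nlinarith [Real.exp_pos (u ^ 2 / a)]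
  calc u ^ 2 * Real.exp (-(u ^ 2 / a)) ≤ (a * Real.exp (u ^ 2 / a)) * Real.exp (-(u ^ 2 / a)) := by
        nlinarith [Real.exp_pos (-(u ^ 2 / a))]
    _ = a := by rw [mul_assoc, ← Real.exp_add]; simp

private lemma exp_half_le (hσ : 0 < σ) (u : ℝ) :
    Real.exp (-u ^ 2 / (2 * σ ^ 2)) ≤ Real.exp (-u ^ 2 / (4 * σ ^ 2)) := by
  apply Real.exp_le_exp.2
  rw [div_le_div_iff₀ (by positivity) (by positivity)]
  nlinarith [sq_nonneg u, sq_nonneg σ]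

private lemma sq_kernel_bound (hσ : 0 < σ) (u : ℝ) :
    u ^ 2 * Real.exp (-u ^ 2 / (2 * σ ^ 2)) ≤ 4 * σ ^ 2 * Real.exp (-u ^ 2 / (4 * σ ^ 2)) := by
  have key := sq_mul_exp_le' (a := 4 * σ ^ 2) (by positivity) u
  have hsplit : Real.exp (-u ^ 2 / (2 * σ ^ 2))
      = Real.exp (-(u ^ 2 / (4 * σ ^ 2))) * Real.exp (-u ^ 2 / (4 * σ ^ 2)) := by
    rw [← Real.exp_add]; congr 1; field_simp; ring
  rw [hsplit, ← mul_assoc]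
  exact mul_le_mul_of_nonneg_right key (Real.exp_pos _).le

private lemma abs_kernel_bound (hσ : 0 < σ) (u : ℝ) :
    |u| * Real.exp (-u ^ 2 / (2 * σ ^ 2)) ≤ 2 * σ * Real.exp (-u ^ 2 / (4 * σ ^ 2)) := by
  have h1 : |u| ≤ u ^ 2 / (4 * σ) + σ := by
    have h0 : 4 * σ * |u| ≤ u ^ 2 + 4 * σ ^ 2 := by
      nlinarith [sq_nonneg (|u| - 2 * σ), sq_abs u]
    have heq : u ^ 2 / (4 * σ) + σ = (u ^ 2 + 4 * σ ^ 2) / (4 * σ) := by field_simp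
    rw [heq, le_div_iff₀ (by positivity)]
    nlinarith
  have hE : 0 < Real.exp (-u ^ 2 / (2 * σ ^ 2)) := Real.exp_pos _
  have h2 : |u| * Real.exp (-u ^ 2 / (2 * σ ^ 2))
      ≤ (u ^ 2 * Real.exp (-u ^ 2 / (2 * σ ^ 2))) / (4 * σ) + σ * Real.exp (-u ^ 2 / (2 * σ ^ 2)) := by
    have := mul_le_mul_of_nonneg_right h1 hE.le
    calc |u| * Real.exp (-u ^ 2 / (2 * σ ^ 2))
        ≤ (u ^ 2 / (4 * σ) + σ) * Real.exp (-u ^ 2 / (2 * σ ^ 2)) := this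
      _ = (u ^ 2 * Real.exp (-u ^ 2 / (2 * σ ^ 2))) / (4 * σ) + σ * Real.exp (-u ^ 2 / (2 * σ ^ 2)) := by
          ring
  have h3 := sq_kernel_bound hσ u
  have h4 := exp_half_le hσ u
  calc |u| * Real.exp (-u ^ 2 / (2 * σ ^ 2))
      ≤ (u ^ 2 * Real.exp (-u ^ 2 / (2 * σ ^ 2))) / (4 * σ) + σ * Real.exp (-u ^ 2 / (2 * σ ^ 2)) := h2
    _ ≤ (4 * σ ^ 2 * Real.exp (-u ^ 2 / (4 * σ ^ 2))) / (4 * σ) + σ * Real.exp (-u ^ 2 / (4 * σ ^ 2)) := by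
        gcongr
    _ = 2 * σ * Real.exp (-u ^ 2 / (4 * σ ^ 2)) := by field_simp; ring

private lemma shift_bound (hσ : 0 < σ) {x x₀ t : ℝ} (hx : |x - x₀| ≤ 1) :
    Real.exp (-(x - t) ^ 2 / (4 * σ ^ 2))
      ≤ Real.exp (1 / (4 * σ ^ 2)) * Real.exp (-(x₀ - t) ^ 2 / (8 * σ ^ 2)) := by
  rw [← Real.exp_add]
  apply Real.exp_le_exp.2
  have h : (x₀ - t) ^ 2 ≤ 2 * (x - t) ^ 2 + 2 * (x - x₀) ^ 2 := by
    have hid : x₀ - t = (x - t) - (x - x₀) := by ring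
    rw [hid]; nlinarith [sq_nonneg ((x - t) + (x - x₀))]
  have h2 : (x - x₀) ^ 2 ≤ 1 := by nlinarith [sq_abs (x - x₀), abs_nonneg (x - x₀)]
  have hkey : -(x - t) ^ 2 ≤ 1 - (x₀ - t) ^ 2 / 2 := by nlinarith
  calc -(x - t) ^ 2 / (4 * σ ^ 2) ≤ (1 - (x₀ - t) ^ 2 / 2) / (4 * σ ^ 2) := by gcongr
    _ = 1 / (4 * σ ^ 2) + -(x₀ - t) ^ 2 / (8 * σ ^ 2) := by field_simp; ring

private lemma integrable_sq_mul_exp_neg_mul_sq {b : ℝ} (hb : 0 < b) :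
    Integrable fun x : ℝ => x ^ 2 * Real.exp (-b * x ^ 2) := by
  have := integrable_rpow_mul_exp_neg_mul_sq hb (by norm_num : (-1:ℝ) < 2)
  convert this using 2 with x
  rw [show ((2:ℝ)) = ((2:ℕ):ℝ) by norm_num, Real.rpow_natCast]

private lemma integral_sq_mul_exp_neg_mul_sq {b : ℝ} (hb : 0 < b) :
    ∫ x : ℝ, x ^ 2 * Real.exp (-b * x ^ 2) = Real.sqrt π / 2 * b ^ (-(3:ℝ)/2) := by
  have h1 : (∫ x : ℝ, x ^ 2 * Real.exp (-b * x ^ 2))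
      = ∫ x : ℝ, (fun y : ℝ => y ^ 2 * Real.exp (-b * y ^ 2)) |x| := by
    congr 1; funext x; simp only; rw [sq_abs]
  rw [h1, integral_comp_abs (f := fun y : ℝ => y ^ 2 * Real.exp (-b * y ^ 2))]
  have h2 : (∫ x in Ioi (0:ℝ), x ^ 2 * Real.exp (-b * x ^ 2))
      = ∫ x in Ioi (0:ℝ), x ^ (2:ℝ) * Real.exp (-b * x ^ (2:ℝ)) := by
    refine setIntegral_congr_fun measurableSet_Ioi (fun x hx => ?_)
    rw [show ((2:ℝ)) = ((2:ℕ):ℝ) by norm_num, Real.rpow_natCast]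
  rw [h2, integral_rpow_mul_exp_neg_mul_rpow (by norm_num) (by norm_num) hb]
  rw [show ((2:ℝ)+1)/2 = (1/2 : ℝ) + 1 by norm_num, Real.Gamma_add_one (by norm_num),
    Real.Gamma_one_half_eq]
  rw [show -((2:ℝ)+1)/2 = -(3:ℝ)/2 by norm_num]
  ring

private lemma claim1 (hσ : 0 < σ) (x₀ : ℝ) (f : ℝ → ℝ) (hf : Measurable f)
    (hf01 : ∀ t, f t ∈ Set.Icc (0 : ℝ) 1) :
    HasDerivAt (fun x => ∫ t : ℝ, f t * Real.exp (-(x - t) ^ 2 / (2 * σ ^ 2)))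
      (∫ t : ℝ, f t * (-(x₀ - t) / σ ^ 2 * Real.exp (-(x₀ - t) ^ 2 / (2 * σ ^ 2)))) x₀ := by
  have habs : ∀ t, |f t| ≤ 1 := fun t => abs_le.2 ⟨by linarith [(hf01 t).1], (hf01 t).2⟩
  have hmeasE : ∀ x : ℝ, AEStronglyMeasurable
      (fun t : ℝ => f t * Real.exp (-(x - t) ^ 2 / (2 * σ ^ 2))) volume := by
    intro x
    exact (hf.mul (by fun_prop)).aestronglyMeasurable
  have hint : Integrable (fun t : ℝ => f t * Real.exp (-(x₀ - t) ^ 2 / (2 * σ ^ 2))) := by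
    refine (integrable_shift_exp (2 * σ ^ 2) x₀ (by positivity)).mono' (hmeasE x₀) ?_
    filter_upwards with t
    rw [Real.norm_eq_abs, abs_mul, abs_of_pos (Real.exp_pos _)]
    calc |f t| * Real.exp (-(x₀ - t) ^ 2 / (2 * σ ^ 2))
        ≤ 1 * Real.exp (-(x₀ - t) ^ 2 / (2 * σ ^ 2)) :=
          mul_le_mul_of_nonneg_right (habs t) (Real.exp_pos _).le
      _ = _ := one_mul _
  have h := hasDerivAt_integral_of_dominated_loc_of_deriv_le (μ := volume)
      (F := fun x t => f t * Real.exp (-(x - t) ^ 2 / (2 * σ ^ 2)))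
      (F' := fun x t => f t * (-(x - t) / σ ^ 2 * Real.exp (-(x - t) ^ 2 / (2 * σ ^ 2))))
      (bound := fun t => 2 / σ * Real.exp (1 / (4 * σ ^ 2)) *
        Real.exp (-(x₀ - t) ^ 2 / (8 * σ ^ 2)))
      (x₀ := x₀) (ball_mem_nhds x₀ one_pos)
      (Filter.Eventually.of_forall hmeasE) hint
      ((hf.mul (by fun_prop)).aestronglyMeasurable)
      ?_ ?_ ?_
  · exact h.2
  · filter_upwards with t
    intro x hx
    have hx1 : |x - x₀| ≤ 1 := le_of_lt (by simpa [Real.dist_eq] using mem_ball_iff_norm.1 hx)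
    rw [Real.norm_eq_abs, abs_mul, abs_mul, abs_div, abs_of_pos (Real.exp_pos _), abs_neg]
    calc |f t| * (|x - t| / |σ ^ 2| * Real.exp (-(x - t) ^ 2 / (2 * σ ^ 2)))
        ≤ 1 * (|x - t| / σ ^ 2 * Real.exp (-(x - t) ^ 2 / (2 * σ ^ 2))) := by
          rw [abs_of_pos (by positivity : (0:ℝ) < σ ^ 2)]
          exact mul_le_mul (habs t) le_rfl (by positivity) zero_le_one
      _ = (|x - t| * Real.exp (-(x - t) ^ 2 / (2 * σ ^ 2))) / σ ^ 2 := by ring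
      _ ≤ (2 * σ * Real.exp (-(x - t) ^ 2 / (4 * σ ^ 2))) / σ ^ 2 :=
          (div_le_div_iff_of_pos_right (by positivity : (0:ℝ) < σ ^ 2)).2 (abs_kernel_bound hσ _)
      _ ≤ (2 * σ * (Real.exp (1 / (4 * σ ^ 2)) * Real.exp (-(x₀ - t) ^ 2 / (8 * σ ^ 2)))) / σ ^ 2 := by
          gcongr
          exact shift_bound hσ hx1
      _ = 2 / σ * Real.exp (1 / (4 * σ ^ 2)) * Real.exp (-(x₀ - t) ^ 2 / (8 * σ ^ 2)) := by
          field_simp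
  · exact ((integrable_shift_exp (8 * σ ^ 2) x₀ (by positivity)).const_mul _)
  · filter_upwards with t
    intro x hx
    exact (hasDerivAt_K σ t x hσ.ne').const_mul (f t)

private lemma claim2 (hσ : 0 < σ) (x₀ : ℝ) (f : ℝ → ℝ) (hf : Measurable f)
    (hf01 : ∀ t, f t ∈ Set.Icc (0 : ℝ) 1) :
    HasDerivAt (fun x => ∫ t : ℝ, f t * (-(x - t) / σ ^ 2 * Real.exp (-(x - t) ^ 2 / (2 * σ ^ 2))))
      (∫ t : ℝ, f t * (((x₀ - t) ^ 2 / σ ^ 4 - 1 / σ ^ 2) *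
        Real.exp (-(x₀ - t) ^ 2 / (2 * σ ^ 2)))) x₀ := by
  have habs : ∀ t, |f t| ≤ 1 := fun t => abs_le.2 ⟨by linarith [(hf01 t).1], (hf01 t).2⟩
  have hmeasE : ∀ x : ℝ, AEStronglyMeasurable
      (fun t : ℝ => f t * (-(x - t) / σ ^ 2 * Real.exp (-(x - t) ^ 2 / (2 * σ ^ 2)))) volume := by
    intro x
    exact (hf.mul (by fun_prop)).aestronglyMeasurable
  have hptbd : ∀ x t : ℝ, ‖f t * (-(x - t) / σ ^ 2 * Real.exp (-(x - t) ^ 2 / (2 * σ ^ 2)))‖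
      ≤ 2 / σ * Real.exp (-(x - t) ^ 2 / (4 * σ ^ 2)) := by
    intro x t
    rw [Real.norm_eq_abs, abs_mul, abs_mul, abs_div, abs_of_pos (Real.exp_pos _), abs_neg]
    calc |f t| * (|x - t| / |σ ^ 2| * Real.exp (-(x - t) ^ 2 / (2 * σ ^ 2)))
        ≤ 1 * (|x - t| / σ ^ 2 * Real.exp (-(x - t) ^ 2 / (2 * σ ^ 2))) := by
          rw [abs_of_pos (by positivity : (0:ℝ) < σ ^ 2)]
          exact mul_le_mul (habs t) le_rfl (by positivity) zero_le_one
      _ = (|x - t| * Real.exp (-(x - t) ^ 2 / (2 * σ ^ 2))) / σ ^ 2 := by ring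
      _ ≤ (2 * σ * Real.exp (-(x - t) ^ 2 / (4 * σ ^ 2))) / σ ^ 2 :=
          (div_le_div_iff_of_pos_right (by positivity : (0:ℝ) < σ ^ 2)).2 (abs_kernel_bound hσ _)
      _ = 2 / σ * Real.exp (-(x - t) ^ 2 / (4 * σ ^ 2)) := by field_simp
  have hint : Integrable
      (fun t : ℝ => f t * (-(x₀ - t) / σ ^ 2 * Real.exp (-(x₀ - t) ^ 2 / (2 * σ ^ 2)))) := by
    refine ((integrable_shift_exp (4 * σ ^ 2) x₀ (by positivity)).const_mul (2 / σ)).mono'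
      (hmeasE x₀) ?_
    filter_upwards with t
    exact hptbd x₀ t
  have h := hasDerivAt_integral_of_dominated_loc_of_deriv_le (μ := volume)
      (F := fun x t => f t * (-(x - t) / σ ^ 2 * Real.exp (-(x - t) ^ 2 / (2 * σ ^ 2))))
      (F' := fun x t => f t * (((x - t) ^ 2 / σ ^ 4 - 1 / σ ^ 2) *
        Real.exp (-(x - t) ^ 2 / (2 * σ ^ 2))))
      (bound := fun t => 5 / σ ^ 2 * Real.exp (1 / (4 * σ ^ 2)) *
        Real.exp (-(x₀ - t) ^ 2 / (8 * σ ^ 2)))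
      (x₀ := x₀) (ball_mem_nhds x₀ one_pos)
      (Filter.Eventually.of_forall hmeasE) hint
      ((hf.mul (by fun_prop)).aestronglyMeasurable)
      ?_ ?_ ?_
  · exact h.2
  · filter_upwards with t
    intro x hx
    have hx1 : |x - x₀| ≤ 1 := le_of_lt (by simpa [Real.dist_eq] using mem_ball_iff_norm.1 hx)
    rw [Real.norm_eq_abs, abs_mul, abs_mul, abs_of_pos (Real.exp_pos _)]
    have hblock : |(x - t) ^ 2 / σ ^ 4 - 1 / σ ^ 2| ≤ (x - t) ^ 2 / σ ^ 4 + 1 / σ ^ 2 := by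
      refine (abs_sub _ _).trans ?_
      rw [abs_of_nonneg (by positivity : (0:ℝ) ≤ (x - t) ^ 2 / σ ^ 4),
        abs_of_nonneg (by positivity : (0:ℝ) ≤ 1 / σ ^ 2)]
    calc |f t| * (|(x - t) ^ 2 / σ ^ 4 - 1 / σ ^ 2| * Real.exp (-(x - t) ^ 2 / (2 * σ ^ 2)))
        ≤ 1 * (((x - t) ^ 2 / σ ^ 4 + 1 / σ ^ 2) * Real.exp (-(x - t) ^ 2 / (2 * σ ^ 2))) := by
          refine mul_le_mul (habs t) ?_ (by positivity) zero_le_one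
          exact mul_le_mul_of_nonneg_right hblock (Real.exp_pos _).le
      _ = ((x - t) ^ 2 * Real.exp (-(x - t) ^ 2 / (2 * σ ^ 2))) / σ ^ 4
            + Real.exp (-(x - t) ^ 2 / (2 * σ ^ 2)) / σ ^ 2 := by ring
      _ ≤ (4 * σ ^ 2 * Real.exp (-(x - t) ^ 2 / (4 * σ ^ 2))) / σ ^ 4
            + Real.exp (-(x - t) ^ 2 / (4 * σ ^ 2)) / σ ^ 2 :=
          add_le_add ((div_le_div_iff_of_pos_right (by positivity : (0:ℝ) < σ ^ 4)).2 (sq_kernel_bound hσ _))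
            ((div_le_div_iff_of_pos_right (by positivity : (0:ℝ) < σ ^ 2)).2 (exp_half_le hσ _))
      _ = 5 / σ ^ 2 * Real.exp (-(x - t) ^ 2 / (4 * σ ^ 2)) := by field_simp; ring
      _ ≤ 5 / σ ^ 2 * (Real.exp (1 / (4 * σ ^ 2)) * Real.exp (-(x₀ - t) ^ 2 / (8 * σ ^ 2))) := by
          gcongr
          exact shift_bound hσ hx1
      _ = 5 / σ ^ 2 * Real.exp (1 / (4 * σ ^ 2)) * Real.exp (-(x₀ - t) ^ 2 / (8 * σ ^ 2)) := by
          ring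
  · exact ((integrable_shift_exp (8 * σ ^ 2) x₀ (by positivity)).const_mul _)
  · filter_upwards with t
    intro x hx
    exact (hasDerivAt_K' σ t x hσ.ne').const_mul (f t)

private lemma final_calc (hσ : 0 < σ) :
    (1 / Real.sqrt (2 * π * σ ^ 2)) *
      (1 / σ ^ 4 * (Real.sqrt π / 2 * ((1 / (2 * σ ^ 2) : ℝ) ^ (-(3:ℝ)/2)))
        + 1 / σ ^ 2 * Real.sqrt (π / (1 / (2 * σ ^ 2)))) = 2 / σ ^ 2 := by
  have h2σ : (0:ℝ) < 2 * σ ^ 2 := by positivity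
  have hb : ((1 / (2 * σ ^ 2) : ℝ)) ^ (-(3:ℝ)/2) = (2 * σ ^ 2) ^ ((3:ℝ)/2) := by
    rw [one_div, Real.inv_rpow h2σ.le, show (-(3:ℝ)/2) = -((3:ℝ)/2) by norm_num,
      Real.rpow_neg h2σ.le, inv_inv]
  have hb2 : (2 * σ ^ 2 : ℝ) ^ ((3:ℝ)/2) = (2 * σ ^ 2) * Real.sqrt (2 * σ ^ 2) := by
    rw [show ((3:ℝ)/2) = 1 + 1/2 by norm_num, Real.rpow_add h2σ, Real.rpow_one,
      ← Real.sqrt_eq_rpow]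
  have hπ : π / (1 / (2 * σ ^ 2)) = π * (2 * σ ^ 2) := by field_simp
  have hs1 : Real.sqrt (π * (2 * σ ^ 2)) = Real.sqrt π * Real.sqrt (2 * σ ^ 2) :=
    Real.sqrt_mul pi_pos.le _
  have hs2 : Real.sqrt (2 * π * σ ^ 2) = Real.sqrt π * Real.sqrt (2 * σ ^ 2) := by
    rw [show 2 * π * σ ^ 2 = π * (2 * σ ^ 2) by ring]; exact hs1
  rw [hb, hb2, hπ, hs1, hs2]
  have hp : Real.sqrt π ≠ 0 := ne_of_gt (Real.sqrt_pos.2 pi_pos)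
  have hs : Real.sqrt (2 * σ ^ 2) ≠ 0 := ne_of_gt (Real.sqrt_pos.2 h2σ)
  have hσ' : σ ≠ 0 := hσ.ne'
  field_simp
  ring

end Aux

theorem gaussian_smoothing_second_deriv_bound
    (σ : ℝ) (hσ : 0 < σ) (f : ℝ → ℝ) (hf : Measurable f)
    (hf01 : ∀ t, f t ∈ Set.Icc (0 : ℝ) 1) :
    ∀ x : ℝ,
      |iteratedDeriv 2
        (fun x : ℝ => (1 / Real.sqrt (2 * π * σ ^ 2)) *
          ∫ t : ℝ, f t * Real.exp (-(x - t) ^ 2 / (2 * σ ^ 2))) x|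
      ≤ 2 / σ ^ 2 := by
  intro x
  have habs : ∀ t, |f t| ≤ 1 := fun t => abs_le.2 ⟨by linarith [(hf01 t).1], (hf01 t).2⟩
  set c : ℝ := 1 / Real.sqrt (2 * π * σ ^ 2) with hc
  have hcpos : 0 < c := by
    rw [hc]
    have : 0 < Real.sqrt (2 * π * σ ^ 2) := Real.sqrt_pos.2 (by positivity)
    positivity
  have hderiv1 : deriv (fun x : ℝ => c * ∫ t : ℝ, f t * Real.exp (-(x - t) ^ 2 / (2 * σ ^ 2)))
      = fun y : ℝ => c * ∫ t : ℝ, f t * (-(y - t) / σ ^ 2 *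
          Real.exp (-(y - t) ^ 2 / (2 * σ ^ 2))) :=
    funext fun y => ((claim1 hσ y f hf hf01).const_mul c).deriv
  have hd2 : HasDerivAt (fun y : ℝ => c * ∫ t : ℝ, f t * (-(y - t) / σ ^ 2 *
        Real.exp (-(y - t) ^ 2 / (2 * σ ^ 2))))
      (c * ∫ t : ℝ, f t * (((x - t) ^ 2 / σ ^ 4 - 1 / σ ^ 2) *
        Real.exp (-(x - t) ^ 2 / (2 * σ ^ 2)))) x :=
    (claim2 hσ x f hf hf01).const_mul c
  have hiter : iteratedDeriv 2
      (fun x : ℝ => c * ∫ t : ℝ, f t * Real.exp (-(x - t) ^ 2 / (2 * σ ^ 2))) x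
      = c * ∫ t : ℝ, f t * (((x - t) ^ 2 / σ ^ 4 - 1 / σ ^ 2) *
          Real.exp (-(x - t) ^ 2 / (2 * σ ^ 2))) := by
    rw [show (2:ℕ) = 1 + 1 from rfl, iteratedDeriv_succ, iteratedDeriv_one, hderiv1]
    exact hd2.deriv
  rw [hiter, abs_mul, abs_of_pos hcpos]
  -- integrability of the majorant
  have hb2 : (0:ℝ) < 1 / (2 * σ ^ 2) := by positivity
  have h1 : Integrable (fun u : ℝ => 1 / σ ^ 4 *
      (u ^ 2 * Real.exp (-(1 / (2 * σ ^ 2)) * u ^ 2))) :=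
    (integrable_sq_mul_exp_neg_mul_sq hb2).const_mul _
  have h2 : Integrable (fun u : ℝ => 1 / σ ^ 2 * Real.exp (-(1 / (2 * σ ^ 2)) * u ^ 2)) :=
    (integrable_exp_neg_mul_sq hb2).const_mul _
  have heq : (fun u : ℝ => (u ^ 2 / σ ^ 4 + 1 / σ ^ 2) * Real.exp (-u ^ 2 / (2 * σ ^ 2)))
      = fun u : ℝ => 1 / σ ^ 4 * (u ^ 2 * Real.exp (-(1 / (2 * σ ^ 2)) * u ^ 2))
        + 1 / σ ^ 2 * Real.exp (-(1 / (2 * σ ^ 2)) * u ^ 2) := by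
    funext u
    rw [show -u ^ 2 / (2 * σ ^ 2) = -(1 / (2 * σ ^ 2)) * u ^ 2 by ring]
    ring
  have hGint : Integrable (fun u : ℝ =>
      (u ^ 2 / σ ^ 4 + 1 / σ ^ 2) * Real.exp (-u ^ 2 / (2 * σ ^ 2))) := by
    rw [heq]; exact h1.add h2
  have hshift : Integrable (fun t : ℝ =>
      ((x - t) ^ 2 / σ ^ 4 + 1 / σ ^ 2) * Real.exp (-(x - t) ^ 2 / (2 * σ ^ 2))) :=
    hGint.comp_sub_left x
  have hbound : ‖∫ t : ℝ, f t * (((x - t) ^ 2 / σ ^ 4 - 1 / σ ^ 2) *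
        Real.exp (-(x - t) ^ 2 / (2 * σ ^ 2)))‖
      ≤ ∫ t : ℝ, ((x - t) ^ 2 / σ ^ 4 + 1 / σ ^ 2) *
          Real.exp (-(x - t) ^ 2 / (2 * σ ^ 2)) := by
    refine norm_integral_le_of_norm_le hshift (Filter.Eventually.of_forall fun t => ?_)
    have hblock : |(x - t) ^ 2 / σ ^ 4 - 1 / σ ^ 2| ≤ (x - t) ^ 2 / σ ^ 4 + 1 / σ ^ 2 := by
      refine (abs_sub _ _).trans ?_
      rw [abs_of_nonneg (by positivity : (0:ℝ) ≤ (x - t) ^ 2 / σ ^ 4),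
        abs_of_nonneg (by positivity : (0:ℝ) ≤ 1 / σ ^ 2)]
    rw [Real.norm_eq_abs, abs_mul, abs_mul, abs_of_pos (Real.exp_pos _)]
    calc |f t| * (|(x - t) ^ 2 / σ ^ 4 - 1 / σ ^ 2| * Real.exp (-(x - t) ^ 2 / (2 * σ ^ 2)))
        ≤ 1 * (((x - t) ^ 2 / σ ^ 4 + 1 / σ ^ 2) * Real.exp (-(x - t) ^ 2 / (2 * σ ^ 2))) :=
          mul_le_mul (habs t)
            (mul_le_mul_of_nonneg_right hblock (Real.exp_pos _).le)
            (by positivity) zero_le_one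
      _ = _ := one_mul _
  have hval : (∫ t : ℝ, ((x - t) ^ 2 / σ ^ 4 + 1 / σ ^ 2) *
        Real.exp (-(x - t) ^ 2 / (2 * σ ^ 2)))
      = ∫ u : ℝ, (u ^ 2 / σ ^ 4 + 1 / σ ^ 2) * Real.exp (-u ^ 2 / (2 * σ ^ 2)) :=
    integral_sub_left_eq_self
      (fun u : ℝ => (u ^ 2 / σ ^ 4 + 1 / σ ^ 2) * Real.exp (-u ^ 2 / (2 * σ ^ 2))) volume x
  have hGval : (∫ u : ℝ, (u ^ 2 / σ ^ 4 + 1 / σ ^ 2) * Real.exp (-u ^ 2 / (2 * σ ^ 2)))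
      = 1 / σ ^ 4 * (Real.sqrt π / 2 * ((1 / (2 * σ ^ 2) : ℝ) ^ (-(3:ℝ)/2)))
        + 1 / σ ^ 2 * Real.sqrt (π / (1 / (2 * σ ^ 2))) := by
    rw [heq, integral_add h1 h2, MeasureTheory.integral_const_mul, MeasureTheory.integral_const_mul,
      integral_sq_mul_exp_neg_mul_sq hb2, integral_gaussian]
  calc c * |∫ t : ℝ, f t * (((x - t) ^ 2 / σ ^ 4 - 1 / σ ^ 2) *
        Real.exp (-(x - t) ^ 2 / (2 * σ ^ 2)))|
      ≤ c * ∫ t : ℝ, ((x - t) ^ 2 / σ ^ 4 + 1 / σ ^ 2) *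
          Real.exp (-(x - t) ^ 2 / (2 * σ ^ 2)) := by
        refine mul_le_mul_of_nonneg_left ?_ hcpos.le
        rw [← Real.norm_eq_abs]
        exact hbound
    _ = 2 / σ ^ 2 := by
        rw [hval, hGval, hc]
        exact final_calc hσ
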